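/- (Path Contraction) Let G be a cop-win graph and let v and w be two vertices of G both of corner rank k. If the shortest path from v to w in the graph G^(k) has length m, then there is no path from v to w in G of length less than m; that is, the distance between v and w in G is at least their distance in G^(k). -/

import Mathlib

namespace CopsRobbers

variable {V : Type*}

/-- The closed neighborhood of `v` within the vertex set `S` (graphs are reflexive,
so `v` itself belongs to its closed neighborhood). -/
def closedNbhd (G : SimpleGraph V) (S : Set V) (v : V) : Set V :=
  {u | u ∈ S ∧ (u = v ∨ G.Adj u v)}

/-- `v` is a strict corner of the subgraph induced on `S`: some other vertex `w ∈ S`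
strictly corners `v`, i.e. `N[v] ⊊ N[w]` within `S`. -/
def StrictCorner (G : SimpleGraph V) (S : Set V) (v : V) : Prop :=
  v ∈ S ∧ ∃ w ∈ S, w ≠ v ∧ closedNbhd G S v ⊂ closedNbhd G S w

/-- The remaining vertex sets of the corner ranking procedure (0-indexed auxiliary
version): at each step all current strict corners are removed. -/
def stageAux (G : SimpleGraph V) : ℕ → Set V
  | 0 => Set.univ
  | n + 1 => stageAux G n \ {v | StrictCorner G (stageAux G n) v}

/-- `stage G k` is the vertex set of `G^(k)` (for `k ≥ 1`), so `stage G 1 = V(G)`. -/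
def stage (G : SimpleGraph V) (k : ℕ) : Set V := stageAux G (k - 1)

/-- The corner rank of a vertex: the least `k ≥ 1` such that `v` is a strict corner
of `G^(k)`, or `G^(k)` is a clique still containing `v`; and `⊤` (that is, `∞`) if
there is no such `k`. -/
noncomputable def cornerRank (G : SimpleGraph V) (v : V) : ℕ∞ :=
  sInf {k : ℕ∞ | ∃ n : ℕ, k = (n : ℕ∞) ∧ 1 ≤ n ∧
    (StrictCorner G (stage G n) v ∨ (G.IsClique (stage G n) ∧ v ∈ stage G n))}

/-- The corner rank of a graph: the largest corner rank of a vertex. -/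
noncomputable def graphRank (G : SimpleGraph V) : ℕ∞ := ⨆ v, cornerRank G v

/-- A graph is cop-win iff every vertex has finite corner rank. -/
def CopWin (G : SimpleGraph V) : Prop := ∀ v, cornerRank G v ≠ ⊤

/-- `v` dominates the set `S`: `v` is (reflexively) adjacent to every vertex of `S`. -/
def Dominates (G : SimpleGraph V) (v : V) (S : Set V) : Prop :=
  ∀ u ∈ S, u = v ∨ G.Adj v u

/-- A cop-win graph of corner rank `α ≥ 2` is `tp1` if some vertex of corner rank `α`
dominates the vertex set of `G^(α-1)`. -/
def Tp1 (G : SimpleGraph V) : Prop :=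
  ∃ α : ℕ, 2 ≤ α ∧ graphRank G = (α : ℕ∞) ∧
    ∃ v, cornerRank G v = (α : ℕ∞) ∧ Dominates G v (stage G (α - 1))

/-- `G` realizes the vector `(x_α, …, x_1)` (written as the list `[x_α, …, x_1]`):
`G` is cop-win of corner rank `α` and for each `k`, `x_k` is the number of vertices
of corner rank `k`. -/
def Realizes (G : SimpleGraph V) (x : List ℕ) : Prop :=
  CopWin G ∧ graphRank G = (x.length : ℕ∞) ∧
  ∀ i : Fin x.length,
    x.get i = {v | cornerRank G v = ((x.length - (i : ℕ) : ℕ) : ℕ∞)}.ncard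

/-- `G` r-realizes `x` (for `r ∈ {0,1}`): `G` realizes `x` and `G` is tp-r. -/
def RRealizes (G : SimpleGraph V) (r : ℕ) (x : List ℕ) : Prop :=
  Realizes G x ∧ (Tp1 G ↔ r = 1)

/-- A vector is realizable if it is the rank cardinality vector of some finite cop-win graph. -/
def Realizable (x : List ℕ) : Prop :=
  ∃ (W : Type) (_ : Fintype W) (G : SimpleGraph W), Realizes G x

/-- A vector is r-realizable if some finite tp-r cop-win graph realizes it. -/
def RRealizable (r : ℕ) (x : List ℕ) : Prop :=
  ∃ (W : Type) (_ : Fintype W) (G : SimpleGraph W), RRealizes G r x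

open Classical in
/-- The capture time of a cop-win graph: `cr(G) - r(G)`. -/
noncomputable def captureTime (G : SimpleGraph V) : ℕ :=
  (graphRank G).toNat - (if Tp1 G then 1 else 0)

end CopsRobbers
namespace CopsRobbers

variable {V : Type} [Fintype V]

/-- A retraction-like map from `T` onto `S`. -/
structure Retr (G : SimpleGraph V) (T S : Set V) (f : V → V) : Prop where
  maps : ∀ u ∈ T, f u ∈ S
  fix : ∀ u ∈ S, f u = u
  pres : ∀ u ∈ T, ∀ u' ∈ T, (u = u' ∨ G.Adj u u') → (f u = f u' ∨ G.Adj (f u) (f u'))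

lemma exists_dominator (G : SimpleGraph V) (S : Set V) (v : V)
    (hv : StrictCorner G S v) :
    ∃ w ∈ S, ¬ StrictCorner G S w ∧ closedNbhd G S v ⊆ closedNbhd G S w := by
  obtain ⟨hvS, w0, hw0S, _, hsub⟩ := hv
  have hfin : ({w ∈ S | closedNbhd G S v ⊆ closedNbhd G S w}).Finite := Set.toFinite _
  have hne : ({w ∈ S | closedNbhd G S v ⊆ closedNbhd G S w}).Nonempty :=
    ⟨v, hvS, subset_rfl⟩
  obtain ⟨w, ⟨hwS, hwsub⟩, hmax⟩ :=
    Set.Finite.exists_maximalFor (closedNbhd G S) _ hfin hne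
  refine ⟨w, hwS, ?_, hwsub⟩
  rintro ⟨_, w', hw'S, _, hss⟩
  exact hss.2 (hmax ⟨hw'S, hwsub.trans hss.subset⟩ hss.subset)

lemma mem_closedNbhd_of_adj (G : SimpleGraph V) (S : Set V) {u u' : V}
    (hu' : u' ∈ S) (h : u = u' ∨ G.Adj u u') : u' ∈ closedNbhd G S u := by
  refine ⟨hu', ?_⟩
  rcases h with h | h
  · exact Or.inl h.symm
  · exact Or.inr h.symm

lemma step_retr (G : SimpleGraph V) (n : ℕ) :
    ∃ f, Retr G (stageAux G n) (stageAux G (n+1)) f := by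
  classical
  set S := stageAux G n with hS
  refine ⟨fun v => if h : StrictCorner G S v then (exists_dominator G S v h).choose else v,
    ?_, ?_, ?_⟩
  · intro u hu
    by_cases h : StrictCorner G S u
    · simp only [dif_pos h]
      obtain ⟨h1, h2, _⟩ := (exists_dominator G S u h).choose_spec
      exact ⟨h1, h2⟩
    · simp only [dif_neg h]
      exact ⟨hu, h⟩
  · intro u hu
    have : ¬ StrictCorner G S u := hu.2
    simp only [dif_neg this]
  · intro u hu u' hu' hadj
    have hsub : ∀ x, closedNbhd G S x ⊆
        closedNbhd G S (if h : StrictCorner G S x then (exists_dominator G S x h).choose else x) := by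
      intro x
      by_cases h : StrictCorner G S x
      · simp only [dif_pos h]
        exact (exists_dominator G S x h).choose_spec.2.2
      · simp only [dif_neg h]
        exact subset_rfl
    set f : V → V := fun v => if h : StrictCorner G S v then (exists_dominator G S v h).choose else v with hf
    have hfS : ∀ x ∈ S, f x ∈ S := by
      intro x hx
      by_cases h : StrictCorner G S x
      · simp only [hf, dif_pos h]
        exact (exists_dominator G S x h).choose_spec.1
      · simpa only [hf, dif_neg h]
    have h1 : u' ∈ closedNbhd G S (f u) := hsub u (mem_closedNbhd_of_adj G S hu' hadj)
    have h2 : f u = u' ∨ G.Adj (f u) u' := by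
      rcases h1.2 with h | h
      · exact Or.inl h.symm
      · exact Or.inr h.symm
    have h3 : f u ∈ closedNbhd G S (f u') :=
      hsub u' (mem_closedNbhd_of_adj G S (hfS u hu) (by rcases h2 with h|h; exact Or.inl h.symm; exact Or.inr h.symm))
    rcases h3.2 with h | h
    · exact Or.inl h
    · exact Or.inr h

lemma iter_retr (G : SimpleGraph V) (n : ℕ) :
    ∃ f, Retr G Set.univ (stageAux G n) f := by
  induction n with
  | zero =>
    exact ⟨id, fun u _ => by simp [stageAux], fun u _ => rfl,
      fun u _ u' _ h => h⟩
  | succ n ih =>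
    obtain ⟨f, hf⟩ := ih
    obtain ⟨g, hg⟩ := step_retr G n
    have hsub : stageAux G (n+1) ⊆ stageAux G n := Set.diff_subset
    refine ⟨g ∘ f, ?_, ?_, ?_⟩
    · intro u hu
      exact hg.maps _ (hf.maps u hu)
    · intro u hu
      simp only [Function.comp_apply, hf.fix u (hsub hu), hg.fix u hu]
    · intro u hu u' hu' h
      exact hg.pres _ (hf.maps u hu) _ (hf.maps u' hu') (hf.pres u hu u' hu' h)

lemma walk_map (G : SimpleGraph V) (S : Set V) (f : V → V)
    (hmap : ∀ u, f u ∈ S)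
    (hpres : ∀ u u', G.Adj u u' → f u = f u' ∨ G.Adj (f u) (f u'))
    {a b : V} (p : G.Walk a b) :
    ∃ q : (SimpleGraph.induce S G).Walk ⟨f a, hmap a⟩ ⟨f b, hmap b⟩,
      q.length ≤ p.length := by
  induction p with
  | nil => exact ⟨SimpleGraph.Walk.nil, le_refl _⟩
  | @cons a b c h p ih =>
    obtain ⟨q, hq⟩ := ih
    rcases hpres _ _ h with heq | hadj
    · refine ⟨q.copy (Subtype.ext heq).symm rfl, ?_⟩
      rw [SimpleGraph.Walk.length_copy]
      simpa using Nat.le_succ_of_le hq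
    · refine ⟨SimpleGraph.Walk.cons (by simpa using hadj) q, ?_⟩
      simpa using hq

end CopsRobbers

/-- Path Contraction: if `v` and `w` both have corner rank `k` and their
distance in `G^(k)` is `m`, then every walk from `v` to `w` in `G` has length at least `m`. -/
theorem CopsRobbers.path_contraction
    {V : Type} [Fintype V] (G : SimpleGraph V) (hG : CopsRobbers.CopWin G)
    (v w : V) (k : ℕ)
    (hv : CopsRobbers.cornerRank G v = (k : ℕ∞))
    (hw : CopsRobbers.cornerRank G w = (k : ℕ∞))
    (hvS : v ∈ CopsRobbers.stage G k) (hwS : w ∈ CopsRobbers.stage G k)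
    (m : ℕ)
    (hreach : (SimpleGraph.induce (CopsRobbers.stage G k) G).Reachable ⟨v, hvS⟩ ⟨w, hwS⟩)
    (hm : (SimpleGraph.induce (CopsRobbers.stage G k) G).dist ⟨v, hvS⟩ ⟨w, hwS⟩ = m) :
    ∀ p : G.Walk v w, m ≤ p.length := by
  intro p
  obtain ⟨f, hf⟩ := CopsRobbers.iter_retr G (k - 1)
  have hmap : ∀ u, f u ∈ CopsRobbers.stage G k := fun u => hf.maps u trivial
  have hpres : ∀ u u', G.Adj u u' → f u = f u' ∨ G.Adj (f u) (f u') :=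
    fun u u' h => hf.pres u trivial u' trivial (Or.inr h)
  obtain ⟨q, hq⟩ := CopsRobbers.walk_map G (CopsRobbers.stage G k) f hmap hpres p
  have hfv : f v = v := hf.fix v hvS
  have hfw : f w = w := hf.fix w hwS
  have e1 : (⟨f v, hmap v⟩ : {x // x ∈ CopsRobbers.stage G k}) = ⟨v, hvS⟩ := Subtype.ext hfv
  have e2 : (⟨f w, hmap w⟩ : {x // x ∈ CopsRobbers.stage G k}) = ⟨w, hwS⟩ := Subtype.ext hfw
  have hle := (SimpleGraph.dist_le (q.copy e1 e2)).trans
    (by simpa [SimpleGraph.Walk.length_copy] using hq)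
  omega
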